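/- Lower bound on index from vertex sharing: if in a plan P two distinct paths π_i and π_j visit a common vertex v at times T_i and T_j respectively with T_i<T_j, then every vertex-disjoint decomposition of P must contain a segmentation point t_ℓ with T_i < t_ℓ ≤ T_j; consequently, if there are m pairwise 'nested or ordered' shared-vertex events with pairwise disjoint time intervals (T_i^{(1)},T_j^{(1)}],...,(T_i^{(m)},T_j^{(m)}], then the index of P is at least m+1. -/

import Mathlib

/-- Paths of length `m` (occupying positions `0,...,m-1`) are non-colliding:
no vertex collisions and no edge swaps. -/
def NonColliding {V : Type*} (m : ℕ) (p q : ℕ → V) : Prop :=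
  (∀ k < m, p k ≠ q k) ∧ ∀ k, k + 1 < m → (p k, p (k + 1)) ≠ (q (k + 1), q k)

/-- The path segments over the time interval `[a, b)` are pairwise vertex disjoint. -/
def SegDisjoint {V : Type*} {n : ℕ} (π : Fin n → ℕ → V) (a b : ℕ) : Prop :=
  ∀ i j : Fin n, i ≠ j → Disjoint (π i '' Set.Ico a b) (π j '' Set.Ico a b)

/-- A vertex-disjoint decomposition of a plan of length `K` (times `0,...,K-1`):
boundaries `0 = t 0 < t 1 < ... < t r = K`, with each segment pairwise vertex disjoint. -/
def IsDecomp {V : Type*} {n : ℕ} (K : ℕ) (π : Fin n → ℕ → V) (r : ℕ)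
    (t : Fin (r + 1) → ℕ) : Prop :=
  t 0 = 0 ∧ t (Fin.last r) = K ∧ StrictMono t ∧
    ∀ k : Fin r, SegDisjoint π (t k.castSucc) (t k.succ)

/-- The index of a plan: the minimal index of a vertex-disjoint decomposition. -/
noncomputable def planIndex {V : Type*} {n : ℕ} (K : ℕ) (π : Fin n → ℕ → V) : ℕ :=
  sInf {r | ∃ t : Fin (r + 1) → ℕ, IsDecomp K π r t}

lemma part1 {V : Type*} {n K : ℕ} (π : Fin n → ℕ → V)
    (i j : Fin n) (hij : i ≠ j) (Ti Tj : ℕ) (hTT : Ti < Tj) (hTjK : Tj < K)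
    (hv : π i Ti = π j Tj) (r : ℕ) (t : Fin (r + 1) → ℕ) (ht : IsDecomp K π r t) :
    ∃ k : Fin (r + 1), Ti < t k ∧ t k ≤ Tj := by
  classical
  obtain ⟨h0, hKlast, hmono, hseg⟩ := ht
  set s : Finset (Fin (r+1)) := Finset.univ.filter (fun k => Ti < t k) with hs
  have hne : s.Nonempty := ⟨Fin.last r, by simp [hs, hKlast]; omega⟩
  set k := s.min' hne with hkdef
  have hks : k ∈ s := Finset.min'_mem s hne
  have hkTi : Ti < t k := by simpa [hs] using hks
  have hk0 : k ≠ 0 := by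
    intro h
    rw [h, h0] at hkTi; omega
  refine ⟨k, hkTi, ?_⟩
  by_contra hcon
  push_neg at hcon
  obtain ⟨k', hk'⟩ : ∃ k' : Fin r, k'.succ = k := by
    obtain ⟨k', h⟩ := Fin.eq_succ_of_ne_zero hk0; exact ⟨k', h.symm⟩
  have hpredle : t k'.castSucc ≤ Ti := by
    by_contra h
    push_neg at h
    have : k'.castSucc ∈ s := by simp [hs, h]
    have := Finset.min'_le s _ this
    have hlt : k'.castSucc < k := by rw [← hk']; exact Fin.castSucc_lt_succ
    rw [← hkdef] at this
    exact absurd this (not_le.mpr hlt)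
  have hdisj := hseg k' i j hij
  rw [Set.disjoint_left] at hdisj
  exact hdisj ⟨Ti, ⟨hpredle, by rw [hk']; omega⟩, rfl⟩ ⟨Tj, ⟨by omega, by rw [hk']; omega⟩, hv.symm⟩
lemma decomp_exists {V : Type*} {n K : ℕ} (hK : 1 ≤ K) (π : Fin n → ℕ → V)
    (hplan : ∀ i j : Fin n, i ≠ j → NonColliding K (π i) (π j)) :
    ∃ t : Fin (K + 1) → ℕ, IsDecomp K π K t := by
  refine ⟨fun k => k.val, rfl, rfl, fun a b h => h, fun k i j hij => ?_⟩
  have hico : ∀ f : ℕ → V, f '' Set.Ico (k.castSucc : ℕ) (k.succ : ℕ) = {f k.val} := by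
    intro f
    have : Set.Ico (k.castSucc : ℕ) (k.succ : ℕ) = {(k : ℕ)} := by
      ext x; simp [Fin.val_succ]; omega
    rw [this, Set.image_singleton]
  rw [hico, hico, Set.disjoint_singleton]
  exact (hplan i j hij).1 k.val k.isLt

lemma bound_of_decomp {V : Type*} {n K : ℕ} (hK : 1 ≤ K) (π : Fin n → ℕ → V)
    {m : ℕ} {ag1 ag2 : Fin m → Fin n} {Ti Tj : Fin m → ℕ}
    (hne : ∀ p, ag1 p ≠ ag2 p) (htt : ∀ p, Ti p < Tj p) (htk : ∀ p, Tj p < K)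
    (hvv : ∀ p, π (ag1 p) (Ti p) = π (ag2 p) (Tj p))
    (hdisj : ∀ p q, p ≠ q → Disjoint (Set.Ioc (Ti p) (Tj p)) (Set.Ioc (Ti q) (Tj q)))
    (r : ℕ) (t : Fin (r + 1) → ℕ) (ht : IsDecomp K π r t) : m + 1 ≤ r := by
  classical
  obtain ⟨h0, hKlast, hmono, hseg⟩ := id ht
  have hr1 : 1 ≤ r := by
    by_contra h
    push_neg at h
    interval_cases r
    · rw [show Fin.last 0 = 0 from rfl, h0] at hKlast; omega
  have hch : ∀ p : Fin m, ∃ k : Fin (r + 1), Ti p < t k ∧ t k ≤ Tj p := fun p =>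
    part1 π _ _ (hne p) _ _ (htt p) (htk p) (hvv p) r t ht
  choose k hk1 hk2 using hch
  have hinj : Function.Injective k := by
    intro p q hpq
    by_contra hne'
    have := hdisj p q hne'
    rw [Set.disjoint_left] at this
    exact this ⟨hk1 p, hk2 p⟩ ⟨by rw [hpq]; exact hk1 q, by rw [hpq]; exact hk2 q⟩
  have hsub : ∀ p, k p ∈ (Finset.univ : Finset (Fin (r+1))) \ {0, Fin.last r} := by
    intro p
    simp only [Finset.mem_sdiff, Finset.mem_univ, true_and, Finset.mem_insert,
      Finset.mem_singleton]
    push_neg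
    constructor
    · intro h
      have := hk1 p; rw [h, h0] at this; omega
    · intro h
      have := hk2 p; rw [h, hKlast] at this
      have := htk p; omega
  have hcard := Finset.card_le_card_of_injOn (s := (Finset.univ : Finset (Fin m)))
    (t := (Finset.univ : Finset (Fin (r+1))) \ {0, Fin.last r}) k (fun p _ => hsub p)
    (Function.Injective.injOn hinj)
  have h2 : ({0, Fin.last r} : Finset (Fin (r+1))).card = 2 := by
    rw [Finset.card_insert_of_notMem (by
      simp only [Finset.mem_singleton]
      intro h
      have : (0 : Fin (r+1)).val = (Fin.last r).val := by rw [h]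
      simp [Fin.last] at this; omega), Finset.card_singleton]
  rw [Finset.card_sdiff_of_subset (by intro x hx; simp)] at hcard
  simp [h2] at hcard
  omega


theorem index_lower_bound {V : Type*} {n K : ℕ} (hK : 1 ≤ K) (π : Fin n → ℕ → V)
    (hplan : ∀ i j : Fin n, i ≠ j → NonColliding K (π i) (π j)) :
    (∀ i j : Fin n, i ≠ j → ∀ Ti Tj, Ti < Tj → Tj < K → π i Ti = π j Tj →
      ∀ r (t : Fin (r + 1) → ℕ), IsDecomp K π r t →
        ∃ k : Fin (r + 1), Ti < t k ∧ t k ≤ Tj) ∧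
    (∀ m : ℕ, ∀ ag1 ag2 : Fin m → Fin n, ∀ Ti Tj : Fin m → ℕ,
      (∀ p, ag1 p ≠ ag2 p) → (∀ p, Ti p < Tj p) → (∀ p, Tj p < K) →
      (∀ p, π (ag1 p) (Ti p) = π (ag2 p) (Tj p)) →
      (∀ p q, p ≠ q → Disjoint (Set.Ioc (Ti p) (Tj p)) (Set.Ioc (Ti q) (Tj q))) →
      m + 1 ≤ planIndex K π) := by
  constructor
  · intro i j hij Ti Tj hTT hTjK hv r t ht
    exact part1 π i j hij Ti Tj hTT hTjK hv r t ht
  · intro m ag1 ag2 Ti Tj hne htt htk hvv hdisj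
    have hSne : {r | ∃ t : Fin (r + 1) → ℕ, IsDecomp K π r t}.Nonempty :=
      ⟨K, decomp_exists hK π hplan⟩
    obtain ⟨t, ht⟩ := Nat.sInf_mem hSne
    exact bound_of_decomp hK π hne htt htk hvv hdisj _ t ht
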